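/- Let $X$ be a Banach space, $Y_k$ normed spaces, $A_k \in \mathcal{B}(X, Y_k)$, and suppose $X^*$ has $M$-cotype $\rho$ with constant $C$. For $p \in [1, \rho/(\rho-1)]$ and $n \in \mathbb{N}$, define $B_n : X \to \ell_p(Y_1,\ldots,Y_n)$ by $B_n x = (A_1 x, \ldots, A_n x)$. Then $\|B_n\| \geq C \|(\|A_1\|, \ldots, \|A_n\|)\|_r$, where $r$ is defined by $1/p - 1/r = 1 - 1/\rho$. -/

import Mathlib

open scoped ENNReal

private lemma aux_core {𝕜 : Type*} [RCLike 𝕜] {X : Type*} [NormedAddCommGroup X]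
    [NormedSpace 𝕜 X]
    {Y : ℕ → Type*} [∀ k, NormedAddCommGroup (Y k)] [∀ k, NormedSpace 𝕜 (Y k)]
    (A : ∀ k, X →L[𝕜] Y k)
    {ρ : ℝ} (hρ : 1 ≤ ρ) {C : ℝ} (hC : 0 < C)
    (hcotype : ∀ (m : ℕ) (v : Fin m → StrongDual 𝕜 X),
      ∃ ε : Fin m → 𝕜, (∀ j, ε j = 1 ∨ ε j = -1) ∧
        ‖∑ j, ε j • v j‖ ≥ C * (∑ j, ‖v j‖ ^ ρ) ^ (1 / ρ))
    (n : ℕ) (c a : Fin n → ℝ) (hc : ∀ k, 0 ≤ c k) (ha : ∀ k, 0 ≤ a k)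
    (haA : ∀ k : Fin n, a k < ‖A k‖ ∨ c k * a k = 0)
    (M : ℝ) (hM : 0 ≤ M)
    (hbound : ∀ x : X, ∑ k, c k * ‖A k x‖ ≤ M * ‖x‖) :
    C * (∑ k, (c k * a k) ^ ρ) ^ (1 / ρ) ≤ M := by
  have hρ0 : (0:ℝ) < ρ := lt_of_lt_of_le one_pos hρ
  have hφ : ∀ k : Fin n, ∃ φ : X →L[𝕜] 𝕜,
      c k * a k ≤ c k * ‖φ‖ ∧ ∀ x, ‖φ x‖ ≤ ‖A k x‖ := by
    intro k
    rcases haA k with h | h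
    · obtain ⟨x0, hx0, hx0'⟩ := (A k).exists_lt_apply_of_lt_opNorm h
      have hne : A k x0 ≠ 0 := by
        intro hz
        rw [hz, norm_zero] at hx0'
        exact absurd hx0' (not_lt.mpr (ha k))
      obtain ⟨g, hg1, hgx⟩ := exists_dual_vector 𝕜 (A k x0) (norm_ne_zero_iff.mpr hne)
      refine ⟨g.comp (A k), ?_, ?_⟩
      · have h1 : ‖g.comp (A k) x0‖ = ‖A k x0‖ := by
          simp [ContinuousLinearMap.comp_apply, hgx]
        have h2 : ‖g.comp (A k) x0‖ ≤ ‖g.comp (A k)‖ * ‖x0‖ :=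
          (g.comp (A k)).le_opNorm x0
        have h3 : a k ≤ ‖g.comp (A k)‖ := by
          nlinarith [norm_nonneg (g.comp (A k)), norm_nonneg x0]
        exact mul_le_mul_of_nonneg_left h3 (hc k)
      · intro x
        calc ‖g.comp (A k) x‖ ≤ ‖g‖ * ‖A k x‖ := g.le_opNorm _
        _ = ‖A k x‖ := by rw [hg1, one_mul]
    · exact ⟨0, by simp [h], by simp⟩
  choose φ hφ1 hφ2 using hφ
  obtain ⟨ε, hε, hineq⟩ := hcotype n (fun k => (c k : 𝕜) • φ k)
  have hεn : ∀ j, ‖ε j‖ = 1 := by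
    intro j; rcases hε j with h | h <;> simp [h]
  have hcnorm : ∀ j, ‖(c j : 𝕜)‖ = c j := by
    intro j; rw [RCLike.norm_ofReal, abs_of_nonneg (hc j)]
  have hlow : C * (∑ k, (c k * a k) ^ ρ) ^ (1 / ρ) ≤
      ‖∑ j, ε j • (c j : 𝕜) • φ j‖ := by
    refine le_trans ?_ hineq
    refine mul_le_mul_of_nonneg_left ?_ hC.le
    refine Real.rpow_le_rpow
      (Finset.sum_nonneg fun k _ => Real.rpow_nonneg (mul_nonneg (hc k) (ha k)) _)
      ?_ (by positivity)
    refine Finset.sum_le_sum fun k _ => ?_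
    refine Real.rpow_le_rpow (mul_nonneg (hc k) (ha k)) ?_ hρ0.le
    calc c k * a k ≤ c k * ‖φ k‖ := hφ1 k
    _ = ‖(c k : 𝕜) • φ k‖ := by rw [norm_smul ((c k : 𝕜)) (φ k), hcnorm k]
  have hup : ‖∑ j, ε j • (c j : 𝕜) • φ j‖ ≤ M := by
    refine ContinuousLinearMap.opNorm_le_bound _ hM fun x => ?_
    calc ‖(∑ j, ε j • (c j : 𝕜) • φ j) x‖
        = ‖∑ j, ε j • (c j : 𝕜) • φ j x‖ := by
          rw [ContinuousLinearMap.sum_apply]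
          simp only [ContinuousLinearMap.coe_smul', Pi.smul_apply]
    _ ≤ ∑ j, ‖ε j • (c j : 𝕜) • φ j x‖ := norm_sum_le _ _
    _ ≤ ∑ j, c j * ‖A j x‖ := by
        refine Finset.sum_le_sum fun j _ => ?_
        rw [norm_smul, norm_smul, hεn j, one_mul, hcnorm j]
        exact mul_le_mul_of_nonneg_left (hφ2 j x) (hc j)
    _ ≤ M * ‖x‖ := hbound x
  exact hlow.trans hup

/-- If `X*` has `M`-cotype `ρ` with constant `C`, `p ∈ [1, ρ/(ρ-1)]` and
`Bₙ x = (A₁ x, …, Aₙ x) ∈ ℓ_p(Y₁,…,Yₙ)`, then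
`‖Bₙ‖ ≥ C * ‖(‖A₁‖,…,‖Aₙ‖)‖_r` where `1/p - 1/r = 1 - 1/ρ`. -/
theorem stmt_15 (𝕜 : Type*) [RCLike 𝕜] (X : Type*) [NormedAddCommGroup X]
    [NormedSpace 𝕜 X] [CompleteSpace X]
    (Y : ℕ → Type*) [∀ k, NormedAddCommGroup (Y k)] [∀ k, NormedSpace 𝕜 (Y k)]
    (A : ∀ k, X →L[𝕜] Y k)
    (ρ : ℝ) (hρ : 1 ≤ ρ) (C : ℝ) (hC : 0 < C)
    (hcotype : ∀ (m : ℕ) (v : Fin m → StrongDual 𝕜 X),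
      ∃ ε : Fin m → 𝕜, (∀ j, ε j = 1 ∨ ε j = -1) ∧
        ‖∑ j, ε j • v j‖ ≥ C * (∑ j, ‖v j‖ ^ ρ) ^ (1 / ρ))
    (p r : ℝ≥0∞) [Fact (1 ≤ p)] [Fact (1 ≤ r)]
    (hp2 : p ≤ ENNReal.ofReal ρ / ENNReal.ofReal (ρ - 1))
    (hr : 1 / p = (1 - 1 / ENNReal.ofReal ρ) + 1 / r)
    (n : ℕ) (B : X →L[𝕜] PiLp p (fun k : Fin n => Y k))
    (hB : ∀ (x : X) (k : Fin n), B x k = A k x) :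
    ‖B‖ ≥ C * ‖(WithLp.equiv r (Fin n → ℝ)).symm (fun k : Fin n => ‖A k‖)‖ := by
  classical
  have hρ0 : (0:ℝ) < ρ := lt_of_lt_of_le one_pos hρ
  rw [ge_iff_le]
  set T := ‖(WithLp.equiv r (Fin n → ℝ)).symm (fun k : Fin n => ‖A k‖)‖ with hTdef
  rcases le_or_gt T 0 with hT0 | hT0
  · have : C * T ≤ 0 := mul_nonpos_of_nonneg_of_nonpos hC.le hT0
    linarith [norm_nonneg B]
  have hex : ∃ k0 : Fin n, 0 < ‖A k0‖ := by
    by_contra h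
    push_neg at h
    have hz : (fun k : Fin n => ‖A k‖) = 0 := by
      funext k
      exact le_antisymm (h k) (norm_nonneg _)
    rw [hTdef, hz, WithLp.equiv_symm_apply, WithLp.toLp_zero] at hT0
    simp at hT0
  obtain ⟨k0', hk0'⟩ := hex
  -- coordinatewise bound for the PiLp norm
  have coord : ∀ (x : PiLp p (fun k : Fin n => Y k)) (k : Fin n), ‖x k‖ ≤ ‖x‖ := by
    intro x k
    rcases eq_or_ne p ∞ with hp | hp
    · subst hp
      rw [PiLp.norm_eq_ciSup]
      exact le_ciSup (f := fun i => ‖x i‖) (Finite.bddAbove_range _) k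
    · have hpt : 0 < p.toReal :=
        ENNReal.toReal_pos (one_pos.trans_le (Fact.out : 1 ≤ p)).ne' hp
      rw [PiLp.norm_eq_sum hpt]
      have h1 : ‖x k‖ = (‖x k‖ ^ p.toReal) ^ (1 / p.toReal) := by
        rw [one_div, Real.rpow_rpow_inv (norm_nonneg _) hpt.ne']
      rw [h1]
      refine Real.rpow_le_rpow (by positivity) ?_ (by positivity)
      exact Finset.single_le_sum (f := fun i => ‖x i‖ ^ p.toReal)
        (fun i _ => by positivity) (Finset.mem_univ k)
  -- the key estimate with margin δ
  have key : ∀ δ : ℝ, 0 < δ → δ < 1 → C * ((1 - δ) * T) ≤ ‖B‖ := by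
    intro δ hδ0 hδ1
    set a : Fin n → ℝ := fun k => (1 - δ) * ‖A k‖ with hadef
    have ha : ∀ k, 0 ≤ a k := fun k => by
      simp only [hadef]
      exact mul_nonneg (by linarith) (norm_nonneg _)
    have haA : ∀ k : Fin n, a k < ‖A k‖ ∨ a k = 0 := by
      intro k
      rcases (norm_nonneg (A k)).eq_or_lt with h | h
      · right; simp [hadef, ← h]
      · left
        simp only [hadef]
        nlinarith
    rcases eq_or_ne r ∞ with hrtop | hrtop
    · -- case r = ∞ : T is a sup; use the max coordinate
      subst hrtop
      haveI : Nonempty (Fin n) := ⟨k0'⟩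
      obtain ⟨k0, hk0⟩ : ∃ k0 : Fin n, ∀ k : Fin n, ‖A k‖ ≤ ‖A k0‖ :=
        Finite.exists_max (fun k : Fin n => ‖A k‖)
      have hTk0 : T = ‖A k0‖ := by
        rw [hTdef, PiLp.norm_eq_ciSup]
        refine le_antisymm (ciSup_le fun k => ?_) ?_
        · simpa [WithLp.equiv_symm_apply, PiLp.toLp_apply, abs_of_nonneg (norm_nonneg (A k))]
            using hk0 k
        · have := le_ciSup (Finite.bddAbove_range
            (fun k : Fin n => ‖((WithLp.equiv ∞ (Fin n → ℝ)).symm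
              (fun k : Fin n => ‖A k‖)) k‖)) k0
          simpa [WithLp.equiv_symm_apply, PiLp.toLp_apply, abs_of_nonneg (norm_nonneg (A k0))]
            using this
      have haux := aux_core A hρ hC hcotype n
        (fun k => if k = k0 then (1:ℝ) else 0) a
        (fun k => by split <;> norm_num) ha
        (fun k => (haA k).imp id (fun h => by rw [h, mul_zero]))
        ‖B‖ (norm_nonneg B) ?_
      · have hsum : (∑ k : Fin n, ((if k = k0 then (1:ℝ) else 0) * a k) ^ ρ)
            = a k0 ^ ρ := by
          rw [Finset.sum_eq_single k0]
          · simp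
          · intro k _ hk
            simp [hk, Real.zero_rpow hρ0.ne']
          · simp
        rw [hsum, one_div, Real.rpow_rpow_inv (ha k0) hρ0.ne'] at haux
        calc C * ((1 - δ) * T) = C * a k0 := by rw [hTk0]
        _ ≤ ‖B‖ := haux
      · intro x
        have hsum : (∑ k : Fin n, (if k = k0 then (1:ℝ) else 0) * ‖A k x‖)
            = ‖A k0 x‖ := by
          rw [Finset.sum_eq_single k0]
          · simp
          · intro k _ hk
            simp [hk]
          · simp
        rw [hsum, ← hB x k0]
        exact le_trans (coord (B x) k0) (B.le_opNorm x)
    · -- case r ≠ ∞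
      have hr1 : (1:ℝ≥0∞) ≤ r := Fact.out
      have hp1 : (1:ℝ≥0∞) ≤ p := Fact.out
      have hrne0 : r ≠ 0 := (one_pos.trans_le hr1).ne'
      have hinvρ_le : 1 / ENNReal.ofReal ρ ≤ 1 := by
        rw [one_div]
        exact ENNReal.inv_le_one.mpr (ENNReal.one_le_ofReal.mpr hρ)
      have hptop : p ≠ ∞ := by
        intro hptop
        rw [hptop] at hr
        simp only [ENNReal.div_top] at hr
        have h0 : (1:ℝ≥0∞) / r = 0 := (add_eq_zero.mp hr.symm).2
        rw [one_div, ENNReal.inv_eq_zero] at h0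
        exact hrtop h0
      have hPr1 : (1:ℝ) ≤ p.toReal := by
        rw [← ENNReal.toReal_one]
        exact ENNReal.toReal_mono hptop hp1
      have hRr1 : (1:ℝ) ≤ r.toReal := by
        rw [← ENNReal.toReal_one]
        exact ENNReal.toReal_mono hrtop hr1
      have hPr0 : (0:ℝ) < p.toReal := one_pos.trans_le hPr1
      have hRr0 : (0:ℝ) < r.toReal := one_pos.trans_le hRr1
      -- real version of the exponent relation
      have hreal : 1 / p.toReal = (1 - 1 / ρ) + 1 / r.toReal := by
        have h1 : ((1:ℝ≥0∞) / p).toReal = 1 / p.toReal := by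
          rw [one_div, one_div, ENNReal.toReal_inv]
        have h2 : ((1:ℝ≥0∞) - 1 / ENNReal.ofReal ρ).toReal = 1 - 1 / ρ := by
          rw [ENNReal.toReal_sub_of_le hinvρ_le ENNReal.one_ne_top]
          rw [one_div, ENNReal.toReal_inv, ENNReal.toReal_ofReal (by linarith)]
          simp
        have h3 : ((1:ℝ≥0∞) / r).toReal = 1 / r.toReal := by
          rw [one_div, one_div, ENNReal.toReal_inv]
        have h4 : ((1:ℝ≥0∞) - 1 / ENNReal.ofReal ρ) ≠ ∞ :=
          (lt_of_le_of_lt tsub_le_self ENNReal.one_lt_top).ne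
        have h5 : (1:ℝ≥0∞) / r ≠ ∞ := by
          rw [one_div]
          exact ENNReal.inv_ne_top.mpr hrne0
        calc 1 / p.toReal = ((1:ℝ≥0∞) / p).toReal := h1.symm
        _ = (((1:ℝ≥0∞) - 1 / ENNReal.ofReal ρ) + 1 / r).toReal := by rw [hr]
        _ = (1 - 1 / ρ) + 1 / r.toReal := by rw [ENNReal.toReal_add h4 h5, h2, h3]
      have hTS : T = (∑ k : Fin n, ‖A k‖ ^ r.toReal) ^ (1 / r.toReal) := by
        rw [hTdef, PiLp.norm_eq_sum hRr0]
        congr 1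
        refine Finset.sum_congr rfl fun k _ => ?_
        rw [WithLp.equiv_symm_apply, PiLp.toLp_apply, Real.norm_eq_abs,
          abs_of_nonneg (norm_nonneg (A k))]
      set S : ℝ := ∑ k : Fin n, ‖A k‖ ^ r.toReal with hSdef
      have hS0 : 0 < S := by
        refine Finset.sum_pos' (fun k _ => Real.rpow_nonneg (norm_nonneg _) _)
          ⟨k0', Finset.mem_univ _, Real.rpow_pos_of_pos hk0' _⟩
      have hBx : ∀ x : X,
          ‖B x‖ = (∑ k : Fin n, ‖A k x‖ ^ p.toReal) ^ (1 / p.toReal) := by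
        intro x
        rw [PiLp.norm_eq_sum hPr0]
        congr 1
        exact Finset.sum_congr rfl fun k _ => by rw [hB x k]
      rcases eq_or_lt_of_le hPr1 with hPeq | hPlt
      · -- subcase p.toReal = 1, then r.toReal = ρ
        have hRρ : r.toReal = ρ := by
          rw [← hPeq] at hreal
          norm_num at hreal
          have h6 : ρ⁻¹ = r.toReal⁻¹ := by linarith
          have h7 := congrArg Inv.inv h6
          simpa using h7.symm
        have haux := aux_core A hρ hC hcotype n (fun _ => (1:ℝ)) a
          (fun _ => zero_le_one) ha
          (fun k => (haA k).imp id (fun h => by rw [h, mul_zero]))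
          ‖B‖ (norm_nonneg B) ?_
        · have hsum : (∑ k : Fin n, ((1:ℝ) * a k) ^ ρ) = (1 - δ) ^ ρ * S := by
            rw [hSdef, Finset.mul_sum]
            refine Finset.sum_congr rfl fun k _ => ?_
            rw [one_mul]
            simp only [hadef]
            rw [Real.mul_rpow (by linarith) (norm_nonneg _), hRρ]
          rw [hsum] at haux
          have hpow : ((1 - δ:ℝ) ^ ρ) ^ (1/ρ) = 1 - δ := by
            rw [one_div, Real.rpow_rpow_inv (by linarith) hρ0.ne']
          rw [Real.mul_rpow (Real.rpow_nonneg (by linarith) _) hS0.le, hpow] at haux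
          rw [hTS, hRρ]
          exact haux
        · intro x
          simp only [one_mul]
          have h1 : ‖B x‖ = ∑ k : Fin n, ‖A k x‖ := by
            rw [hBx x, ← hPeq]
            simp
          calc (∑ k : Fin n, ‖A k x‖) = ‖B x‖ := h1.symm
          _ ≤ ‖B‖ * ‖x‖ := B.le_opNorm x
      · -- subcase 1 < p.toReal : Hölder with the conjugate exponent
        set Q : ℝ := p.toReal / (p.toReal - 1) with hQdef
        have hconj : p.toReal.HolderConjugate Q :=
          Real.HolderConjugate.conjExponent hPlt
        have hQ0 : 0 < Q := hconj.symm.pos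
        have hQR : 1 / Q + 1 / r.toReal = 1 / ρ := by
          have h6 : p.toReal⁻¹ + Q⁻¹ = 1 := by simpa using hconj.inv_add_inv_eq_inv
          rw [inv_eq_one_div, inv_eq_one_div] at h6
          linarith
        have hexp : (r.toReal / Q + 1) * ρ = r.toReal := by
          have h7 : 1 / Q = 1 / ρ - 1 / r.toReal := by linarith
          have h8 : r.toReal / Q = r.toReal * (1 / Q) := by ring
          rw [h8, h7]
          field_simp
          ring
        have hterm : ∀ t : ℝ, 0 ≤ t →
            (t ^ (r.toReal / Q) * t) ^ ρ = t ^ r.toReal := by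
          intro t ht
          rcases ht.eq_or_lt with h | h
          · rw [← h]
            rw [Real.zero_rpow (div_pos hRr0 hQ0).ne', mul_zero,
              Real.zero_rpow hρ0.ne', Real.zero_rpow hRr0.ne']
          · have h1 : t ^ (r.toReal / Q) * t = t ^ (r.toReal / Q + 1) := by
              rw [Real.rpow_add h, Real.rpow_one]
            rw [h1, ← Real.rpow_mul ht, hexp]
        have haux := aux_core A hρ hC hcotype n
          (fun k => ‖A k‖ ^ (r.toReal / Q)) a
          (fun k => Real.rpow_nonneg (norm_nonneg _) _) ha
          (fun k => (haA k).imp id (fun h => by rw [h, mul_zero]))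
          (S ^ (1 / Q) * ‖B‖)
          (mul_nonneg (Real.rpow_nonneg hS0.le _) (norm_nonneg B)) ?_
        · have hsum : (∑ k : Fin n, (‖A k‖ ^ (r.toReal / Q) * a k) ^ ρ)
              = (1 - δ) ^ ρ * S := by
            rw [hSdef, Finset.mul_sum]
            refine Finset.sum_congr rfl fun k _ => ?_
            have h7 : ‖A k‖ ^ (r.toReal / Q) * a k
                = (1 - δ) * (‖A k‖ ^ (r.toReal / Q) * ‖A k‖) := by
              simp only [hadef]; ring
            rw [h7, Real.mul_rpow (by linarith)
              (mul_nonneg (Real.rpow_nonneg (norm_nonneg _) _) (norm_nonneg _)),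
              hterm _ (norm_nonneg _)]
          rw [hsum] at haux
          have hpow : ((1 - δ:ℝ) ^ ρ) ^ (1/ρ) = 1 - δ := by
            rw [one_div, Real.rpow_rpow_inv (by linarith) hρ0.ne']
          rw [Real.mul_rpow (Real.rpow_nonneg (by linarith) _) hS0.le, hpow] at haux
          have hSrw : S ^ (1/ρ) = S ^ (1/Q) * S ^ (1/r.toReal) := by
            rw [← hQR, Real.rpow_add hS0]
          rw [hSrw] at haux
          have hq : (0:ℝ) < S ^ (1/Q) := Real.rpow_pos_of_pos hS0 _
          have h5 : (C * ((1 - δ) * S ^ (1/r.toReal))) * S ^ (1/Q)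
              ≤ ‖B‖ * S ^ (1/Q) := by
            calc (C * ((1 - δ) * S ^ (1/r.toReal))) * S ^ (1/Q)
                = C * ((1 - δ) * (S ^ (1/Q) * S ^ (1/r.toReal))) := by ring
            _ ≤ S ^ (1/Q) * ‖B‖ := haux
            _ = ‖B‖ * S ^ (1/Q) := by ring
          have h6 := le_of_mul_le_mul_right h5 hq
          rw [hTS]
          exact h6
        · intro x
          calc ∑ k : Fin n, ‖A k‖ ^ (r.toReal / Q) * ‖A k x‖
              ≤ (∑ k : Fin n, (‖A k‖ ^ (r.toReal / Q)) ^ Q) ^ (1/Q) *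
                (∑ k : Fin n, ‖A k x‖ ^ p.toReal) ^ (1/p.toReal) :=
                Real.inner_le_Lp_mul_Lq_of_nonneg Finset.univ hconj.symm
                  (fun k _ => Real.rpow_nonneg (norm_nonneg _) _)
                  (fun k _ => norm_nonneg _)
          _ = S ^ (1/Q) * ‖B x‖ := by
                rw [← hBx x]
                congr 2
                rw [hSdef]
                refine Finset.sum_congr rfl fun k _ => ?_
                rw [← Real.rpow_mul (norm_nonneg _), div_mul_cancel₀ _ hQ0.ne']
          _ ≤ S ^ (1/Q) * (‖B‖ * ‖x‖) :=
                mul_le_mul_of_nonneg_left (B.le_opNorm x)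
                  (Real.rpow_nonneg hS0.le _)
          _ = S ^ (1/Q) * ‖B‖ * ‖x‖ := by ring
  -- pass to the limit δ → 0
  by_contra hcon
  push_neg at hcon
  have hCT : 0 < C * T := mul_pos hC hT0
  set δ : ℝ := (C * T - ‖B‖) / (2 * (C * T)) with hδdef
  have hδ0 : 0 < δ := by
    apply div_pos
    · linarith
    · linarith
  have hδ1 : δ < 1 := by
    rw [hδdef, div_lt_one (by linarith)]
    linarith [norm_nonneg B]
  have h1 : δ * (C * T) = (C * T - ‖B‖) / 2 := by
    rw [hδdef]
    field_simp
  have h2 := key δ hδ0 hδ1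
  have h3 : C * ((1 - δ) * T) = C * T - δ * (C * T) := by ring
  linarith
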